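/- Let G be a group and K an algebraically closed field. There exist a finite algebraic group X over K (namely X = ℤ/4ℤ) and an algebraic group cellular automaton τ : X^G → X^G that is (••)-pre-injective but not (•)-pre-injective: for every finite E ⊆ G, dim τ((X^E)_0) = dim X^E = 0, yet τ((X^E)_0) = τ(H_0) for the proper closed subset H = (X ∖ {0})^E ⊊ X^E (here H_0 = H × {0}^{G∖E}). -/

import Mathlib

open TopologicalSpace in
lemma krullDim_zero_of_discrete (T : Type*) [TopologicalSpace T] [DiscreteTopology T]
    [Nonempty T] : topologicalKrullDim T = 0 := by
  have hsing : ∀ S : IrreducibleCloseds T, ∃ x : T, S.carrier = {x} := by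
    intro S
    obtain ⟨x, hx⟩ := S.isIrreducible'.1
    refine ⟨x, Set.eq_singleton_iff_unique_mem.mpr ⟨hx, fun y hy => ?_⟩⟩
    by_contra hne
    have := S.isIrreducible'.2 {y} {x} (isOpen_discrete _) (isOpen_discrete _)
      ⟨y, hy, rfl⟩ ⟨x, hx, rfl⟩
    obtain ⟨z, _, hz1, hz2⟩ := this
    exact hne (hz1.symm.trans hz2)
  have : Nonempty (IrreducibleCloseds T) := by
    obtain ⟨x⟩ := ‹Nonempty T›
    exact ⟨⟨{x}, isIrreducible_singleton, isClosed_discrete _⟩⟩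
  refine le_antisymm ?_ Order.krullDim_nonneg
  rw [topologicalKrullDim, Order.krullDim_eq_iSup_length,
    show (0 : WithBot ℕ∞) = ((0:ℕ∞) : WithBot ℕ∞) from rfl, WithBot.coe_le_coe]
  refine iSup_le fun p => ?_
  rcases Nat.eq_zero_or_pos p.length with h | h
  · simp [h]
  · exfalso
    have hlt : p 0 < p ⟨1, by omega⟩ := by
      have := p.strictMono (show (0 : Fin (p.length + 1)) < ⟨1, by omega⟩ by
        simp [Fin.lt_def])
      exact this
    obtain ⟨x, hx⟩ := hsing (p 0)
    obtain ⟨y, hy⟩ := hsing (p ⟨1, by omega⟩)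
    have hsub : (p 0).carrier ⊆ (p ⟨1, by omega⟩).carrier := le_of_lt hlt
    have hne : (p 0).carrier ≠ (p ⟨1, by omega⟩).carrier := by
      intro h'
      exact (ne_of_lt hlt) (IrreducibleCloseds.ext h')
    rw [hx, hy] at hsub hne
    have : x = y := hsub rfl
    exact hne (by rw [this])

theorem twostar_not_star_example (G : Type*) [Group G]
    (K : Type*) [Field K] [IsAlgClosed K]
    [TopologicalSpace (ZMod 4)] [DiscreteTopology (ZMod 4)] :
    ∃ τ : (G → ZMod 4) → (G → ZMod 4),
      (∀ (c : G → ZMod 4) (g : G), τ c g = 2 * c g) ∧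
      (∀ E : Finset G,
        topologicalKrullDim (τ '' {c : G → ZMod 4 | ∀ g ∉ E, c g = 0}) = 0 ∧
        topologicalKrullDim (E → ZMod 4) = 0) ∧
      (∀ E : Finset G,
        τ '' {c : G → ZMod 4 | ∀ g ∉ E, c g = 0}
          = τ '' {c : G → ZMod 4 | (∀ g ∈ E, c g ≠ 0) ∧ ∀ g ∉ E, c g = 0} ∧
        IsClosed {x : E → ZMod 4 | ∀ m : E, x m ≠ 0} ∧
        (E.Nonempty → {x : E → ZMod 4 | ∀ m : E, x m ≠ 0} ≠ Set.univ)) := by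
  classical
  refine ⟨fun c g => 2 * c g, fun c g => rfl, ?_, ?_⟩
  · intro E
    set τ : (G → ZMod 4) → (G → ZMod 4) := fun c g => 2 * c g
    constructor
    · -- image is finite and nonempty; discrete subspace
      have hSfin : {c : G → ZMod 4 | ∀ g ∉ E, c g = 0}.Finite := by
        have : {c : G → ZMod 4 | ∀ g ∉ E, c g = 0} ⊆
            Set.range (fun (x : E → ZMod 4) (g : G) =>
              if h : g ∈ E then x ⟨g, h⟩ else 0) := by
          intro c hc
          refine ⟨fun m => c m, funext fun g => ?_⟩
          by_cases h : g ∈ E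
          · simp [h]
          · simp [h, hc g h]
        exact (Set.finite_range _).subset this
      have hfin : (τ '' {c : G → ZMod 4 | ∀ g ∉ E, c g = 0}).Finite := hSfin.image _
      haveI := hfin.to_subtype
      haveI : Nonempty (τ '' {c : G → ZMod 4 | ∀ g ∉ E, c g = 0}) :=
        ⟨⟨τ 0, ⟨0, fun g _ => rfl, rfl⟩⟩⟩
      exact krullDim_zero_of_discrete _
    · haveI : Nonempty (E → ZMod 4) := ⟨fun _ => 0⟩
      exact krullDim_zero_of_discrete _
  · intro E
    set τ : (G → ZMod 4) → (G → ZMod 4) := fun c g => 2 * c g with hτ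
    refine ⟨?_, isClosed_discrete _, ?_⟩
    · apply Set.Subset.antisymm
      · rintro _ ⟨c, hc, rfl⟩
        refine ⟨fun g => if g ∈ E ∧ c g = 0 then 2 else c g, ⟨fun g hg => ?_, fun g hg => ?_⟩, ?_⟩
        · by_cases h : c g = 0
          · simp only [hg, h, and_self, if_true]; decide
          · simpa [hg, h] using h
        · have : ¬(g ∈ E ∧ c g = 0) := fun h => hg h.1
          show (if g ∈ E ∧ c g = 0 then 2 else c g) = 0; rw [if_neg this]; exact hc g hg
        · funext g
          by_cases h : g ∈ E ∧ c g = 0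
          · simp only [hτ, h, if_pos, h.2]
            decide
          · simp [hτ, h]
      · rintro _ ⟨c, hc, rfl⟩
        exact ⟨c, hc.2, rfl⟩
    · intro hE hcontra
      obtain ⟨m, hm⟩ := hE
      have : (fun _ : E => (0 : ZMod 4)) ∈ {x : E → ZMod 4 | ∀ m : E, x m ≠ 0} := by
        rw [hcontra]; trivial
      exact this ⟨m, hm⟩ rfl
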